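/- Let A = (a_{i,j}) ∈ UT_n(K) and for 1 ≤ i < j ≤ n set m_{i,j} = -v_K(a_{i,j}), m_λ = Σ_{u} m_{λ_u, λ_{u+1}} for a partition λ of (i,j), and μ_{i,j} = max over partitions λ ∈ Λ_{i,j} of m_λ. Then μ_{i,j} ≥ μ_{i,l} + μ_{l,j} for all i < l < j, μ_{i,j} ≥ m_{i,j}, and the entries a*_{i,j} of A⁻¹ satisfy v_K(a*_{i,j}) ≥ -μ_{i,j}. -/

import Mathlib

/-- Negation, from `ℤ ∪ {+∞}` to `ℤ ∪ {-∞}`. -/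
def negT (t : WithTop ℤ) : WithBot ℤ :=
  WithTop.recTopCoe ⊥ (fun z : ℤ => ((-z : ℤ) : WithBot ℤ)) t

/-- Negation, from `ℤ ∪ {-∞}` to `ℤ ∪ {+∞}`. -/
def negB (t : WithBot ℤ) : WithTop ℤ :=
  WithBot.recBotCoe ⊤ (fun z : ℤ => ((-z : ℤ) : WithTop ℤ)) t

lemma negB_negT (t : WithTop ℤ) : negB (negT t) = t := by
  induction t using WithTop.recTopCoe with
  | top => simp [negT, negB]
  | coe z => simp [negT, negB]

lemma negB_anti {a b : WithBot ℤ} (h : a ≤ b) : negB b ≤ negB a := by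
  induction a using WithBot.recBotCoe with
  | bot => simp [negB]
  | coe x =>
    induction b using WithBot.recBotCoe with
    | bot => simp at h
    | coe y =>
      simp only [negB, WithBot.recBotCoe_coe]
      rw [WithBot.coe_le_coe] at h
      exact_mod_cast neg_le_neg h

lemma negB_add (a b : WithBot ℤ) : negB (a + b) = negB a + negB b := by
  induction a using WithBot.recBotCoe with
  | bot => simp [negB]
  | coe x =>
    induction b using WithBot.recBotCoe with
    | bot => simp [negB]
    | coe y =>
      rw [← WithBot.coe_add]
      simp only [negB, WithBot.recBotCoe_coe]
      rw [← WithTop.coe_add]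
      norm_num [neg_add, add_comm]

def catF {n s1 s2 : ℕ} (f : Fin (s1 + 1) → Fin n) (g : Fin (s2 + 1) → Fin n) :
    Fin (s1 + s2 + 1) → Fin n :=
  fun k =>
    if h : (k : ℕ) ≤ s1 then f ⟨k, Nat.lt_succ_of_le h⟩
    else g ⟨(k : ℕ) - s1, by have := k.isLt; omega⟩

lemma fcongr {n m : ℕ} (f : Fin m → Fin n) {a b : Fin m} (h : (a : ℕ) = (b : ℕ)) : f a = f b :=
  congrArg f (Fin.ext h)

lemma catF_strictMono {n s1 s2 : ℕ} {f : Fin (s1 + 1) → Fin n} {g : Fin (s2 + 1) → Fin n}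
    (hf : ∀ a b, a < b → f a < f b) (hg : ∀ a b, a < b → g a < g b)
    (hfg : f (Fin.last s1) = g 0) :
    ∀ a b : Fin (s1 + s2 + 1), a < b → catF f g a < catF f g b := by
  intro a b hab
  have hab' : (a : ℕ) < (b : ℕ) := hab
  have hsf : StrictMono f := fun x y h => hf x y h
  unfold catF
  by_cases ha : (a : ℕ) ≤ s1 <;> by_cases hb : (b : ℕ) ≤ s1
  · rw [dif_pos ha, dif_pos hb]
    exact hf _ _ (by simpa using hab')
  · rw [dif_pos ha, dif_neg hb]
    calc f ⟨a, _⟩ ≤ f (Fin.last s1) := hsf.monotone (by simpa [Fin.le_def] using ha)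
    _ = g 0 := hfg
    _ < g ⟨(b : ℕ) - s1, _⟩ := hg _ _ (by simp only [Fin.lt_def]; simp; omega)
  · omega
  · rw [dif_neg ha, dif_neg hb]
    exact hg _ _ (by simp only [Fin.lt_def]; omega)

lemma catF_zero {n s1 s2 : ℕ} (f : Fin (s1 + 1) → Fin n) (g : Fin (s2 + 1) → Fin n) :
    catF f g 0 = f 0 := by
  unfold catF
  rw [dif_pos (by simp)]
  exact fcongr f (by simp)

lemma catF_last {n s1 s2 : ℕ} (f : Fin (s1 + 1) → Fin n) (g : Fin (s2 + 1) → Fin n)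
    (hfg : f (Fin.last s1) = g 0) :
    catF f g (Fin.last (s1 + s2)) = g (Fin.last s2) := by
  unfold catF
  cases s2 with
  | zero =>
    rw [dif_pos (by simp)]
    rw [show f ⟨((Fin.last (s1 + 0) : Fin (s1 + 0 + 1)) : ℕ), _⟩ = f (Fin.last s1) from
      fcongr f (by simp)]
    rw [hfg]
    exact fcongr g (by simp)
  | succ m =>
    rw [dif_neg (by simp)]
    exact fcongr g (by simp)

lemma catF_sum {n s1 s2 : ℕ} (f : Fin (s1 + 1) → Fin n) (g : Fin (s2 + 1) → Fin n)
    (hfg : f (Fin.last s1) = g 0) (T : Fin n → Fin n → WithBot ℤ) :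
    ∑ u : Fin (s1 + s2), T (catF f g u.castSucc) (catF f g u.succ)
      = ∑ u : Fin s1, T (f u.castSucc) (f u.succ) + ∑ u : Fin s2, T (g u.castSucc) (g u.succ) := by
  rw [Fin.sum_univ_add (f := fun u : Fin (s1 + s2) => T (catF f g u.castSucc) (catF f g u.succ))]
  congr 1
  · refine Finset.sum_congr rfl fun u _ => ?_
    have hu : (u : ℕ) < s1 := u.isLt
    have h1 : catF f g (Fin.castAdd s2 u).castSucc = f u.castSucc := by
      unfold catF
      rw [dif_pos (by simp only [Fin.coe_castSucc, Fin.coe_castAdd]; omega)]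
      exact fcongr f (by simp)
    have h2 : catF f g (Fin.castAdd s2 u).succ = f u.succ := by
      unfold catF
      rw [dif_pos (by simp only [Fin.val_succ, Fin.coe_castAdd]; omega)]
      exact fcongr f (by simp)
    rw [h1, h2]
  · refine Finset.sum_congr rfl fun u _ => ?_
    have hu : (u : ℕ) < s2 := u.isLt
    have h1 : catF f g (Fin.natAdd s1 u).castSucc = g u.castSucc := by
      unfold catF
      by_cases hzero : (u : ℕ) = 0
      · rw [dif_pos (by simp only [Fin.coe_castSucc, Fin.coe_natAdd]; omega)]
        rw [show f ⟨(((Fin.natAdd s1 u).castSucc : Fin (s1 + s2 + 1)) : ℕ), _⟩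
            = f (Fin.last s1) from fcongr f (by simp [hzero])]
        rw [hfg]
        exact fcongr g (by simp [hzero])
      · rw [dif_neg (by simp only [not_le, Fin.coe_castSucc, Fin.coe_natAdd]; omega)]
        exact fcongr g (by simp only [Fin.coe_castSucc, Fin.coe_natAdd]; omega)
    have h2 : catF f g (Fin.natAdd s1 u).succ = g u.succ := by
      unfold catF
      rw [dif_neg (by simp only [not_le, Fin.val_succ, Fin.coe_natAdd]; omega)]
      exact fcongr g (by simp only [Fin.val_succ, Fin.coe_natAdd]; omega)
    rw [h1, h2]


/-- `μ_{i,j} = max_{λ ∈ Λ_{i,j}} Σ_u m_{λ_u,λ_{u+1}}` where `m_{i,j} = -v_K(a_{i,j})`,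
the maximum being over all strictly increasing sequences from `i` to `j` (partitions,
encoded as strictly monotone functions `f : Fin (s+1) → Fin n` with `f 0 = i`,
`f s = j`). -/
noncomputable def muOf {n : ℕ} {K : Type*} [Field K] (v : AddValuation K (WithTop ℤ))
    (A : Matrix (Fin n) (Fin n) K) (i j : Fin n) : WithBot ℤ :=
  (Finset.range (n + 1)).sup fun s =>
    (Finset.univ.filter
        (fun f : Fin (s + 1) → Fin n =>
          (∀ a b : Fin (s + 1), a < b → f a < f b) ∧ f 0 = i ∧ f (Fin.last s) = j)).sup
      fun f => ∑ u : Fin s, negT (v (A (f u.castSucc) (f u.succ)))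

lemma sum_le_muOf {n : ℕ} {K : Type*} [Field K] (v : AddValuation K (WithTop ℤ))
    (A : Matrix (Fin n) (Fin n) K) {i j : Fin n} {s : ℕ} (f : Fin (s + 1) → Fin n)
    (hmono : ∀ a b : Fin (s + 1), a < b → f a < f b) (h0 : f 0 = i) (hl : f (Fin.last s) = j) :
    (∑ u : Fin s, negT (v (A (f u.castSucc) (f u.succ)))) ≤ muOf v A i j := by
  have hsf : StrictMono f := fun x y h => hmono x y h
  have hcard : s + 1 ≤ n := by
    simpa using Fintype.card_le_of_injective f hsf.injective
  have hmem : f ∈ Finset.univ.filter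
      (fun f : Fin (s + 1) → Fin n =>
        (∀ a b : Fin (s + 1), a < b → f a < f b) ∧ f 0 = i ∧ f (Fin.last s) = j) := by
    simp only [Finset.mem_filter, Finset.mem_univ, true_and]
    exact ⟨hmono, h0, hl⟩
  refine le_trans (Finset.le_sup
    (f := fun f : Fin (s + 1) → Fin n => ∑ u : Fin s, negT (v (A (f u.castSucc) (f u.succ))))
    hmem) ?_
  exact Finset.le_sup (f := fun s => (Finset.univ.filter
        (fun f : Fin (s + 1) → Fin n =>
          (∀ a b : Fin (s + 1), a < b → f a < f b) ∧ f 0 = i ∧ f (Fin.last s) = j)).sup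
      fun f => ∑ u : Fin s, negT (v (A (f u.castSucc) (f u.succ))))
    (Finset.mem_range.mpr (by omega))

lemma muOf_cases {n : ℕ} {K : Type*} [Field K] (v : AddValuation K (WithTop ℤ))
    (A : Matrix (Fin n) (Fin n) K) (i j : Fin n) :
    muOf v A i j = ⊥ ∨ ∃ (s : ℕ) (f : Fin (s + 1) → Fin n),
      (∀ a b : Fin (s + 1), a < b → f a < f b) ∧ f 0 = i ∧ f (Fin.last s) = j ∧
      muOf v A i j = ∑ u : Fin s, negT (v (A (f u.castSucc) (f u.succ))) := by
  obtain ⟨s, _, hs⟩ := Finset.exists_mem_eq_sup (Finset.range (n + 1))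
    ⟨0, by simp⟩ (fun s =>
      (Finset.univ.filter
        (fun f : Fin (s + 1) → Fin n =>
          (∀ a b : Fin (s + 1), a < b → f a < f b) ∧ f 0 = i ∧ f (Fin.last s) = j)).sup
      fun f => ∑ u : Fin s, negT (v (A (f u.castSucc) (f u.succ))))
  rcases Finset.eq_empty_or_nonempty (Finset.univ.filter
      (fun f : Fin (s + 1) → Fin n =>
        (∀ a b : Fin (s + 1), a < b → f a < f b) ∧ f 0 = i ∧ f (Fin.last s) = j)) with he | hne
  · left
    rw [muOf, hs, he, Finset.sup_empty]
  · right
    obtain ⟨f, hf, hfs⟩ := Finset.exists_mem_eq_sup _ hne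
      (fun f : Fin (s + 1) → Fin n => ∑ u : Fin s, negT (v (A (f u.castSucc) (f u.succ))))
    simp only [Finset.mem_filter, Finset.mem_univ, true_and] at hf
    exact ⟨s, f, hf.1, hf.2.1, hf.2.2, by rw [muOf, hs, hfs]⟩

lemma muOf_part2 {n : ℕ} {K : Type*} [Field K] (v : AddValuation K (WithTop ℤ))
    (A : Matrix (Fin n) (Fin n) K) :
    ∀ i j : Fin n, i < j → negT (v (A i j)) ≤ muOf v A i j := by
  intro i j hij
  have h := sum_le_muOf v A (s := 1) (i := i) (j := j) ![i, j]
    (by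
      intro a b hab
      fin_cases a <;> fin_cases b <;> simp_all)
    (by simp) (by simp [Fin.last])
  simpa using h

lemma muOf_part1 {n : ℕ} {K : Type*} [Field K] (v : AddValuation K (WithTop ℤ))
    (A : Matrix (Fin n) (Fin n) K) :
    ∀ i l j : Fin n, i < l → l < j → muOf v A i l + muOf v A l j ≤ muOf v A i j := by
  intro i l j hil hlj
  rcases muOf_cases v A i l with h | ⟨s1, f, hf, hf0, hfl, he1⟩
  · rw [h, WithBot.bot_add]; exact bot_le
  rcases muOf_cases v A l j with h | ⟨s2, g, hg, hg0, hgl, he2⟩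
  · rw [h, WithBot.add_bot]; exact bot_le
  have hfg : f (Fin.last s1) = g 0 := by rw [hfl, hg0]
  rw [he1, he2, ← catF_sum f g hfg (fun x y => negT (v (A x y)))]
  exact sum_le_muOf v A (catF f g) (catF_strictMono hf hg hfg)
    (by rw [catF_zero, hf0]) (by rw [catF_last f g hfg, hgl])


/-- Let `A ∈ UT_n(K)` be unipotent upper triangular, `m_{i,j} = -v_K(a_{i,j})`
and `μ_{i,j}` the maximum of `m_λ` over partitions `λ` of `(i,j)`.  Then
`μ_{i,j} ≥ μ_{i,l} + μ_{l,j}` for `i < l < j`, `μ_{i,j} ≥ m_{i,j}`, and the entries of `A⁻¹`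
satisfy `v_K(a*_{i,j}) ≥ -μ_{i,j}`. -/
theorem mu_superadditive_and_inv_bound {n : ℕ} {K : Type*} [Field K]
    (v : AddValuation K (WithTop ℤ)) (A : Matrix (Fin n) (Fin n) K)
    (hut : ∀ i j : Fin n, j < i → A i j = 0) (hdiag : ∀ i : Fin n, A i i = 1) :
    (∀ i l j : Fin n, i < l → l < j → muOf v A i l + muOf v A l j ≤ muOf v A i j) ∧
    (∀ i j : Fin n, i < j → negT (v (A i j)) ≤ muOf v A i j) ∧
    (∀ i j : Fin n, i < j → negB (muOf v A i j) ≤ v (A⁻¹ i j)) := by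
  refine ⟨muOf_part1 v A, muOf_part2 v A, ?_⟩
  -- matrix facts
  have hbt : A.BlockTriangular id := fun i j h => hut i j h
  have hdet : A.det = 1 := by
    rw [Matrix.det_of_upperTriangular hbt]
    simp [hdiag]
  have hu : IsUnit A.det := by rw [hdet]; exact isUnit_one
  have hAinv : A * A⁻¹ = 1 := Matrix.mul_nonsing_inv A hu
  haveI := A.invertibleOfIsUnitDet hu
  have hinvbt : A⁻¹.BlockTriangular id := Matrix.blockTriangular_inv_of_blockTriangular hbt
  have hinv0 : ∀ p q : Fin n, q < p → A⁻¹ p q = 0 := fun p q h => hinvbt h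
  have hmulapply : ∀ p q : Fin n, ∑ l, A p l * A⁻¹ l q = (1 : Matrix (Fin n) (Fin n) K) p q :=
    fun p q => by rw [← Matrix.mul_apply, hAinv]
  have hinvdiag : ∀ p : Fin n, A⁻¹ p p = 1 := by
    intro p
    have h := hmulapply p p
    rw [Matrix.one_apply_eq] at h
    rw [Finset.sum_eq_single p (fun b _ hbne => ?_) (fun hb => absurd (Finset.mem_univ p) hb)] at h
    · rwa [hdiag, one_mul] at h
    · rcases lt_or_gt_of_ne hbne with hb | hb
      · rw [hut p b hb, zero_mul]
      · rw [hinv0 b p hb, mul_zero]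
  have hrec : ∀ i j : Fin n, i < j →
      A⁻¹ i j = -∑ l ∈ Finset.univ.filter (fun l => i < l), A i l * A⁻¹ l j := by
    intro i j hij
    have h := hmulapply i j
    rw [Matrix.one_apply_ne (ne_of_lt hij)] at h
    rw [← Finset.sum_filter_add_sum_filter_not Finset.univ (fun l => i < l)
      (fun l => A i l * A⁻¹ l j)] at h
    have h2 : ∑ l ∈ Finset.univ.filter (fun l => ¬ i < l), A i l * A⁻¹ l j = A⁻¹ i j := by
      rw [Finset.sum_eq_single i (fun b hb hbne => ?_) (fun hb => ?_)]
      · rw [hdiag, one_mul]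
      · rw [Finset.mem_filter] at hb
        have hblt : b < i := lt_of_le_of_ne (not_lt.mp hb.2) hbne
        rw [hut i b hblt, zero_mul]
      · exact absurd (Finset.mem_filter.mpr ⟨Finset.mem_univ i, lt_irrefl i⟩) hb
    rw [h2] at h
    exact eq_neg_of_add_eq_zero_right h
  have key : ∀ d : ℕ, ∀ i j : Fin n, ((j : ℕ) - (i : ℕ)) = d → i < j →
      negB (muOf v A i j) ≤ v (A⁻¹ i j) := by
    intro d
    induction d using Nat.strong_induction_on with
    | _ d ih =>
    intro i j hd hij
    rw [hrec i j hij, v.map_neg]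
    refine v.map_le_sum ?_
    intro l hl
    rw [Finset.mem_filter] at hl
    have hil : i < l := hl.2
    rw [v.map_mul]
    rcases lt_trichotomy l j with hlj | rfl | hjl
    · have h1 : negT (v (A i l)) ≤ muOf v A i l := muOf_part2 v A i l hil
      have hin : (i : ℕ) < (l : ℕ) := hil
      have hln : (l : ℕ) < (j : ℕ) := hlj
      have h2 : negB (muOf v A l j) ≤ v (A⁻¹ l j) :=
        ih ((j : ℕ) - (l : ℕ)) (by omega) l j rfl hlj
      calc negB (muOf v A i j)
          ≤ negB (negT (v (A i l)) + muOf v A l j) :=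
            negB_anti (le_trans (add_le_add h1 le_rfl) (muOf_part1 v A i l j hil hlj))
        _ = negB (negT (v (A i l))) + negB (muOf v A l j) := negB_add _ _
        _ = v (A i l) + negB (muOf v A l j) := by rw [negB_negT]
        _ ≤ v (A i l) + v (A⁻¹ l j) := add_le_add le_rfl h2
    · rw [hinvdiag, v.map_one, add_zero]
      calc negB (muOf v A i l) ≤ negB (negT (v (A i l))) := negB_anti (muOf_part2 v A i l hil)
        _ = v (A i l) := negB_negT _
    · rw [hinv0 l j hjl, v.map_zero, add_top]
      exact le_top
  exact fun i j hij => key _ i j rfl hij
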